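/- arXiv:2206.14351 — 2 statements merged into one kernel-verified Lean document; each statement's English description precedes it below -/
import Mathlib

section
/- Let δ ≠ id be a permutation and suppose π = δ t_{ab} with ℓ(π) = ℓ(δ) + 1, b > d₂(δ), and a ≤ d₁(δ). Then π has no descent greater than d₂(δ); that is, d₂(π) ≤ d₂(δ). -/
/-- A permutation of the positive integers, modeled as a permutation of `ℕ`
fixing `0` (and, separately assumed, all but finitely many points). -/
def FinPerm (w : Equiv.Perm ℕ) : Prop :=
  w 0 = 0 ∧ {i : ℕ | w i ≠ i}.Finite

/-- The length `ℓ(w)`: the number of inversions, i.e. pairs `i < j` with `w i > w j`. -/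
noncomputable def len (w : Equiv.Perm ℕ) : ℕ :=
  {p : ℕ × ℕ | p.1 < p.2 ∧ w p.2 < w p.1}.ncard

/-- The set of descents: positions `i ≥ 1` with `w i > w (i+1)`. -/
def descents (w : Equiv.Perm ℕ) : Set ℕ :=
  {i : ℕ | 0 < i ∧ w (i + 1) < w i}

/-- `d₁(w)`: the first (smallest) descent of `w`. -/
noncomputable def d1 (w : Equiv.Perm ℕ) : ℕ := sInf (descents w)

/-- `d₂(w)`: the last (largest) descent of `w`. -/
noncomputable def d2 (w : Equiv.Perm ℕ) : ℕ := sSup (descents w)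

/-- `kCover k ρ π` means `ρ ⋖_k π`:  `π = ρ t_{a b}` for some positive
`a ≤ k < b`, with `ℓ(π) = ℓ(ρ) + 1`. -/
def kCover (k : ℕ) (ρ π : Equiv.Perm ℕ) : Prop :=
  ∃ a b : ℕ, 0 < a ∧ a ≤ k ∧ k < b ∧ π = ρ * Equiv.swap a b ∧ len π = len ρ + 1


namespace Stmt12Aux

open Finset


/-- order-reversing pairs for swap a b -/
def InR (a b : ℕ) (p : ℕ × ℕ) : Prop := (p.1 = a ∧ p.2 ≤ b) ∨ (p.2 = b ∧ a ≤ p.1)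

instance (a b : ℕ) (p : ℕ × ℕ) : Decidable (InR a b p) := by unfold InR; infer_instance

def phi (a b : ℕ) (p : ℕ × ℕ) : ℕ × ℕ :=
  if Equiv.swap a b p.1 < Equiv.swap a b p.2 then (Equiv.swap a b p.1, Equiv.swap a b p.2)
  else (Equiv.swap a b p.2, Equiv.swap a b p.1)

lemma rev {a b : ℕ} (hab : a < b) (x y : ℕ) (hxy : x < y) :
    InR a b (x, y) ↔ Equiv.swap a b y < Equiv.swap a b x := by
  simp only [InR, Equiv.swap_apply_def]
  split_ifs <;> omega

lemma swap_ne {a b x y : ℕ} (hxy : x ≠ y) : Equiv.swap a b x ≠ Equiv.swap a b y :=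
  fun h => hxy ((Equiv.swap a b).injective h)

lemma phi_lt {a b : ℕ} (x y : ℕ) (hxy : x < y) : (phi a b (x, y)).1 < (phi a b (x, y)).2 := by
  simp only [phi]
  split_ifs with h
  · exact h
  · show Equiv.swap a b y < Equiv.swap a b x
    have := swap_ne (a := a) (b := b) (show x ≠ y by omega)
    omega

lemma phi_phi {a b : ℕ} (x y : ℕ) (hxy : x < y) : phi a b (phi a b (x, y)) = (x, y) := by
  by_cases h1 : Equiv.swap a b x < Equiv.swap a b y
  · simp only [phi, if_pos h1]
    simp only [Equiv.swap_apply_self]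
    rw [if_pos hxy]
  · simp only [phi, if_neg h1]
    simp only [Equiv.swap_apply_self]
    rw [if_neg (by omega : ¬ y < x)]

lemma phi_of_not_inR {a b : ℕ} (hab : a < b) {x y : ℕ} (hxy : x < y) (h : ¬ InR a b (x, y)) :
    phi a b (x, y) = (Equiv.swap a b x, Equiv.swap a b y) := by
  have h1 : ¬ Equiv.swap a b y < Equiv.swap a b x := fun hc => h ((rev hab x y hxy).mpr hc)
  have h2 := swap_ne (a := a) (b := b) (show x ≠ y by omega)
  simp only [phi]; rw [if_pos (by omega : Equiv.swap a b x < Equiv.swap a b y)]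

lemma phi_of_inR {a b : ℕ} (hab : a < b) {x y : ℕ} (hxy : x < y) (h : InR a b (x, y)) :
    phi a b (x, y) = (Equiv.swap a b y, Equiv.swap a b x) := by
  have h1 : Equiv.swap a b y < Equiv.swap a b x := (rev hab x y hxy).mp h
  simp only [phi]; rw [if_neg (by omega : ¬ Equiv.swap a b x < Equiv.swap a b y)]

lemma inR_phi {a b : ℕ} (hab : a < b) (x y : ℕ) (hxy : x < y) :
    InR a b (phi a b (x, y)) ↔ InR a b (x, y) := by
  by_cases h : InR a b (x, y)
  · rw [phi_of_inR hab hxy h]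
    have h1 : Equiv.swap a b y < Equiv.swap a b x := (rev hab x y hxy).mp h
    rw [rev hab _ _ h1]
    simp only [Equiv.swap_apply_self]
    simp [h, hxy]
  · rw [phi_of_not_inR hab hxy h]
    have h1 : ¬ Equiv.swap a b y < Equiv.swap a b x := fun hc => h ((rev hab x y hxy).mpr hc)
    have h2 := swap_ne (a := a) (b := b) (show x ≠ y by omega)
    have h3 : Equiv.swap a b x < Equiv.swap a b y := by omega
    rw [rev hab _ _ h3]
    simp only [Equiv.swap_apply_self]
    simp [h]
    omega

lemma len_eq_card (w : Equiv.Perm ℕ) (N : ℕ) (h : ∀ i, N ≤ i → w i = i) :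
    len w = #((Finset.range N ×ˢ Finset.range N).filter fun p => p.1 < p.2 ∧ w p.2 < w p.1) := by
  have hlt : ∀ i, i < N → w i < N := by
    intro i hi
    by_contra hge
    push_neg at hge
    have h2 := h (w i) hge
    have h3 := w.injective h2
    omega
  rw [len, ← Set.ncard_coe_finset]
  congr 1
  ext ⟨x, y⟩
  simp only [Finset.coe_filter, Set.mem_setOf_eq, Finset.mem_product, Finset.mem_range]
  constructor
  · rintro ⟨hxy, hinv⟩
    refine ⟨⟨?_, ?_⟩, hxy, hinv⟩
    · by_contra hge; push_neg at hge
      rw [h x hge, h y (by omega)] at hinv; omega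
    · by_contra hge; push_neg at hge
      rw [h y hge] at hinv
      by_cases hx : x < N
      · have := hlt x hx; omega
      · rw [h x (by omega)] at hinv; omega
  · rintro ⟨_, h2⟩; exact h2



lemma pr1 (u v : ℕ) : ((u, v) : ℕ × ℕ).1 = u := rfl
lemma pr2 (u v : ℕ) : ((u, v) : ℕ × ℕ).2 = v := rfl

lemma key (d : Equiv.Perm ℕ) (hfin : {i : ℕ | d i ≠ i}.Finite) (a b : ℕ) (hab : a < b)
    (hlen : len (d * Equiv.swap a b) = len d + 1) :
    d a < d b ∧ ∀ c, a < c → c < b → d c < d a ∨ d b < d c := by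
  classical
  obtain ⟨M, hM⟩ := hfin.bddAbove
  set N := max (b + 1) (M + 1) with hN
  have hbN : b < N := by omega
  have haN : a < N := by omega
  have hNd : ∀ i, N ≤ i → d i = i := by
    intro i hi
    by_contra hne
    have := hM (Set.mem_setOf.mpr hne)
    omega
  have hNp : ∀ i, N ≤ i → (d * Equiv.swap a b) i = i := by
    intro i hi
    rw [Equiv.Perm.mul_apply, Equiv.swap_apply_of_ne_of_ne (by omega) (by omega)]
    exact hNd i hi
  set P := Finset.range N ×ˢ Finset.range N with hP
  have memP : ∀ p : ℕ × ℕ, p ∈ P ↔ p.1 < N ∧ p.2 < N := by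
    intro p; simp [hP, Finset.mem_product]
  have hswN : ∀ x, x < N → Equiv.swap a b x < N := by
    intro x hx
    rw [Equiv.swap_apply_def]
    split_ifs <;> omega
  set Fd := P.filter (fun p => p.1 < p.2 ∧ d p.2 < d p.1) with hFd
  set Fp := P.filter (fun p => p.1 < p.2 ∧ (d * Equiv.swap a b) p.2 < (d * Equiv.swap a b) p.1)
    with hFp
  set Rf := P.filter (fun p => p.1 < p.2 ∧ InR a b p) with hRf
  have memFd : ∀ x y : ℕ, (x, y) ∈ Fd ↔ (x < N ∧ y < N) ∧ x < y ∧ d y < d x := by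
    intro x y
    rw [hFd, Finset.mem_filter, memP]
  have memFp : ∀ x y : ℕ, (x, y) ∈ Fp ↔ (x < N ∧ y < N) ∧ x < y ∧
      d (Equiv.swap a b y) < d (Equiv.swap a b x) := by
    intro x y
    rw [hFp, Finset.mem_filter, memP]
    simp only [pr1, pr2, Equiv.Perm.mul_apply]
  have memRf : ∀ x y : ℕ, (x, y) ∈ Rf ↔ (x < N ∧ y < N) ∧ x < y ∧ InR a b (x, y) := by
    intro x y
    rw [hRf, Finset.mem_filter, memP]
  have hcard : #Fp = #Fd + 1 := by
    rw [hFp, hFd, hP, ← len_eq_card _ N hNp, ← len_eq_card _ N hNd]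
    exact hlen
  -- bijection 1 : Fp \ Rf ≃ Fd \ Rf
  have b1 : #(Fp \ Rf) = #(Fd \ Rf) := by
    apply Finset.card_nbij' (phi a b) (phi a b)
    · rintro ⟨x, y⟩ hp
      rw [Finset.mem_coe, Finset.mem_sdiff, memFp x y, memRf x y] at hp
      obtain ⟨⟨⟨hxN, hyN⟩, hxy, hinv⟩, hnR⟩ := hp
      have hnr : ¬ InR a b (x, y) := fun h => hnR ⟨⟨hxN, hyN⟩, hxy, h⟩
      have hphi := phi_of_not_inR hab hxy hnr
      rw [Finset.mem_coe, Finset.mem_sdiff, hphi, memFd, memRf]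
      refine ⟨⟨⟨hswN x hxN, hswN y hyN⟩, ?_, hinv⟩, ?_⟩
      · have := phi_lt (a := a) (b := b) x y hxy; rw [hphi] at this; exact this
      · rintro ⟨-, -, hr⟩
        rw [← hphi] at hr
        exact hnr ((inR_phi hab x y hxy).mp hr)
    · rintro ⟨x, y⟩ hp
      rw [Finset.mem_coe, Finset.mem_sdiff, memFd x y, memRf x y] at hp
      obtain ⟨⟨⟨hxN, hyN⟩, hxy, hinv⟩, hnR⟩ := hp
      have hnr : ¬ InR a b (x, y) := fun h => hnR ⟨⟨hxN, hyN⟩, hxy, h⟩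
      have hphi := phi_of_not_inR hab hxy hnr
      rw [Finset.mem_coe, Finset.mem_sdiff, hphi, memFp, memRf]
      refine ⟨⟨⟨hswN x hxN, hswN y hyN⟩, ?_, ?_⟩, ?_⟩
      · have := phi_lt (a := a) (b := b) x y hxy; rw [hphi] at this; exact this
      · simp only [Equiv.swap_apply_self]; exact hinv
      · rintro ⟨-, -, hr⟩
        rw [← hphi] at hr
        exact hnr ((inR_phi hab x y hxy).mp hr)
    · rintro ⟨x, y⟩ hp
      rw [Finset.mem_coe, Finset.mem_sdiff, memFp x y] at hp
      exact phi_phi x y hp.1.2.1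
    · rintro ⟨x, y⟩ hp
      rw [Finset.mem_coe, Finset.mem_sdiff, memFd x y] at hp
      exact phi_phi x y hp.1.2.1
  -- bijection 2 : Fp ∩ Rf ≃ Rf \ Fd
  have b2 : #(Fp ∩ Rf) = #(Rf \ Fd) := by
    apply Finset.card_nbij' (phi a b) (phi a b)
    · rintro ⟨x, y⟩ hp
      rw [Finset.mem_coe, Finset.mem_inter, memFp x y, memRf x y] at hp
      obtain ⟨⟨⟨hxN, hyN⟩, hxy, hinv⟩, -, -, hr⟩ := hp
      have hphi := phi_of_inR hab hxy hr
      rw [Finset.mem_coe, Finset.mem_sdiff, hphi, memRf, memFd]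
      have hlt := phi_lt (a := a) (b := b) x y hxy
      rw [hphi] at hlt
      refine ⟨⟨⟨hswN y hyN, hswN x hxN⟩, hlt, ?_⟩, ?_⟩
      · have := (inR_phi hab x y hxy).mpr hr
        rw [hphi] at this
        exact this
      · rintro ⟨-, -, hbad⟩
        omega
    · rintro ⟨x, y⟩ hp
      rw [Finset.mem_coe, Finset.mem_sdiff, memRf x y, memFd x y] at hp
      obtain ⟨⟨⟨hxN, hyN⟩, hxy, hr⟩, hnd⟩ := hp
      have hphi := phi_of_inR hab hxy hr
      have hinv : d x < d y := by
        have hne : d x ≠ d y := fun h => (by omega : x ≠ y) (d.injective h)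
        by_contra hc
        exact hnd ⟨⟨hxN, hyN⟩, hxy, by omega⟩
      rw [Finset.mem_coe, Finset.mem_inter, hphi, memFp, memRf]
      have hlt := phi_lt (a := a) (b := b) x y hxy
      rw [hphi] at hlt
      refine ⟨⟨⟨hswN y hyN, hswN x hxN⟩, hlt, ?_⟩, ⟨hswN y hyN, hswN x hxN⟩, hlt, ?_⟩
      · simp only [Equiv.swap_apply_self]; exact hinv
      · have := (inR_phi hab x y hxy).mpr hr
        rw [hphi] at this
        exact this
    · rintro ⟨x, y⟩ hp
      rw [Finset.mem_coe, Finset.mem_inter, memFp x y] at hp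
      exact phi_phi x y hp.1.2.1
    · rintro ⟨x, y⟩ hp
      rw [Finset.mem_coe, Finset.mem_sdiff, memRf x y] at hp
      exact phi_phi x y hp.1.2.1
  -- cardinality of Rf
  have hRfeq : Rf = ((Finset.Ioc a b).image fun c => (a, c)) ∪
      ((Finset.Ico a b).image fun c => (c, b)) := by
    ext ⟨x, y⟩
    rw [memRf x y]
    simp only [Finset.mem_union, Finset.mem_image, Finset.mem_Ioc, Finset.mem_Ico,
      Prod.mk.injEq, InR, pr1, pr2]
    constructor
    · rintro ⟨⟨hxN, hyN⟩, hxy, hr⟩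
      rcases hr with ⟨h1, h2⟩ | ⟨h1, h2⟩
      · exact Or.inl ⟨y, ⟨by omega, h2⟩, by omega, rfl⟩
      · exact Or.inr ⟨x, ⟨h2, by omega⟩, rfl, by omega⟩
    · rintro (⟨c, ⟨h1, h2⟩, h3, h4⟩ | ⟨c, ⟨h1, h2⟩, h3, h4⟩)
      · refine ⟨⟨by omega, by omega⟩, by omega, Or.inl ⟨by omega, by omega⟩⟩
      · refine ⟨⟨by omega, by omega⟩, by omega, Or.inr ⟨by omega, by omega⟩⟩
  have hinj1 : Function.Injective (fun c : ℕ => ((a, c) : ℕ × ℕ)) := by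
    intro c c' h; simpa using h
  have hinj2 : Function.Injective (fun c : ℕ => ((c, b) : ℕ × ℕ)) := by
    intro c c' h; simpa using h
  have hint : (((Finset.Ioc a b).image fun c => (a, c)) ∩
      ((Finset.Ico a b).image fun c => (c, b))) = {(a, b)} := by
    ext ⟨x, y⟩
    simp only [Finset.mem_inter, Finset.mem_image, Finset.mem_Ioc, Finset.mem_Ico,
      Finset.mem_singleton, Prod.mk.injEq]
    constructor
    · rintro ⟨⟨c, ⟨h1, h2⟩, h3, h4⟩, ⟨c', ⟨h1', h2'⟩, h3', h4'⟩⟩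
      omega
    · rintro ⟨h1, h2⟩
      exact ⟨⟨y, ⟨by omega, by omega⟩, by omega, rfl⟩, ⟨x, ⟨by omega, by omega⟩, rfl, by omega⟩⟩
  have hRfcard : #Rf = 2 * (b - a) - 1 := by
    have hu := Finset.card_union_add_card_inter ((Finset.Ioc a b).image fun c => (a, c))
      ((Finset.Ico a b).image fun c => (c, b))
    rw [hint, Finset.card_singleton, Finset.card_image_of_injective _ hinj1,
      Finset.card_image_of_injective _ hinj2, Nat.card_Ioc, Nat.card_Ico] at hu
    rw [hRfeq]
    omega
  -- combine the counts
  have e1 := Finset.card_sdiff_add_card_inter Fp Rf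
  have e2 := Finset.card_sdiff_add_card_inter Fd Rf
  have e3 := Finset.card_sdiff_add_card_inter Rf Fd
  have hic : #(Fd ∩ Rf) = #(Rf ∩ Fd) := by rw [Finset.inter_comm]
  have hX : #(Rf ∩ Fd) = b - a - 1 := by omega
  -- the witness map
  set g : ℕ → ℕ × ℕ := fun c => if d c < d a then (a, c) else (c, b) with hg
  have ginj : Set.InjOn g (Finset.Ioo a b : Set ℕ) := by
    intro c hc c' hc' h
    simp only [Finset.coe_Ioo, Set.mem_Ioo] at hc hc'
    simp only [hg] at h
    split_ifs at h <;> simp only [Prod.mk.injEq] at h <;> omega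
  have hgcard : #((Finset.Ioo a b).image g) = b - a - 1 := by
    rw [Finset.card_image_of_injOn ginj, Nat.card_Ioo]
  -- step 1 : d a < d b
  have hdab : d a < d b := by
    have hne : d a ≠ d b := fun h => (by omega : a ≠ b) (d.injective h)
    by_contra hba
    push_neg at hba
    have hba' : d b < d a := by omega
    have hsub : insert (a, b) ((Finset.Ioo a b).image g) ⊆ Rf ∩ Fd := by
      intro p hp
      rw [Finset.mem_insert, Finset.mem_image] at hp
      rcases hp with rfl | ⟨c, hc, rfl⟩
      · rw [Finset.mem_inter, memRf, memFd]
        exact ⟨⟨⟨haN, hbN⟩, hab, Or.inl ⟨rfl, le_refl b⟩⟩, ⟨haN, hbN⟩, hab, hba'⟩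
      · rw [Finset.mem_Ioo] at hc
        rw [Finset.mem_inter]
        simp only [hg]
        split_ifs with hcd
        · rw [memRf, memFd]
          refine ⟨⟨⟨haN, by omega⟩, by omega, Or.inl ⟨rfl, by omega⟩⟩,
            ⟨haN, by omega⟩, by omega, hcd⟩
        · have hac : d a < d c := by
            have : d a ≠ d c := fun h => (by omega : a ≠ c) (d.injective h)
            omega
          rw [memRf, memFd]
          refine ⟨⟨⟨by omega, hbN⟩, by omega, Or.inr ⟨rfl, by omega⟩⟩,
            ⟨by omega, hbN⟩, by omega, by omega⟩
    have hnotmem : (a, b) ∉ (Finset.Ioo a b).image g := by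
      rw [Finset.mem_image]
      rintro ⟨c, hc, h⟩
      rw [Finset.mem_Ioo] at hc
      simp only [hg] at h
      split_ifs at h <;> simp only [Prod.mk.injEq] at h <;> omega
    have := Finset.card_le_card hsub
    rw [Finset.card_insert_of_notMem hnotmem, hgcard, hX] at this
    omega
  refine ⟨hdab, ?_⟩
  -- step 2 : no intermediate values
  have hsub2 : Rf ∩ Fd ⊆ (Finset.Ioo a b).image g := by
    rintro ⟨x, y⟩ hp
    rw [Finset.mem_inter, memRf x y, memFd x y] at hp
    obtain ⟨⟨-, hxy, hr⟩, -, -, hinv⟩ := hp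
    rw [Finset.mem_image]
    simp only [InR, pr1, pr2] at hr
    rcases hr with ⟨h1, h2⟩ | ⟨h1, h2⟩
    · have hyb : y ≠ b := by
        intro hyb
        rw [h1, hyb] at hinv
        omega
      refine ⟨y, by rw [Finset.mem_Ioo]; omega, ?_⟩
      simp only [hg]
      rw [h1] at hinv
      rw [if_pos hinv, Prod.mk.injEq]
      exact ⟨h1.symm, rfl⟩
    · have hxa : x ≠ a := by
        intro hxa
        rw [h1, hxa] at hinv
        omega
      refine ⟨x, by rw [Finset.mem_Ioo]; omega, ?_⟩
      simp only [hg]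
      rw [h1] at hinv
      rw [if_neg (by omega), Prod.mk.injEq]
      exact ⟨rfl, h1.symm⟩
  have heq : Rf ∩ Fd = (Finset.Ioo a b).image g :=
    Finset.eq_of_subset_of_card_le hsub2 (by rw [hgcard, hX])
  intro c hc1 hc2
  have hmem : g c ∈ Rf ∩ Fd := by
    rw [heq]
    exact Finset.mem_image_of_mem g (by rw [Finset.mem_Ioo]; exact ⟨hc1, hc2⟩)
  by_cases hcd : d c < d a
  · exact Or.inl hcd
  · refine Or.inr ?_
    rw [Finset.mem_inter] at hmem
    have h2 := hmem.2
    simp only [hg] at h2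
    rw [if_neg hcd, memFd] at h2
    exact h2.2.2

end Stmt12Aux

theorem stmt12 (δ : Equiv.Perm ℕ) (hδ : FinPerm δ) (hne : δ ≠ 1)
    (π : Equiv.Perm ℕ) (a b : ℕ) (ha : 0 < a) (hab : a < b)
    (hb : d2 δ < b) (haa : a ≤ d1 δ)
    (hπ : π = δ * Equiv.swap a b) (hlen : len π = len δ + 1) :
    (∀ i ∈ descents π, i ≤ d2 δ) ∧ d2 π ≤ d2 δ := by
  obtain ⟨hδ0, hδfin⟩ := hδ
  -- descents of δ : nonempty and bounded above
  obtain ⟨M, hM⟩ := hδfin.bddAbove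
  have hfix : ∀ i, M < i → δ i = i := by
    intro i hi
    by_contra hne'
    have := hM (Set.mem_setOf.mpr hne')
    omega
  have hbdd : BddAbove (descents δ) := by
    refine ⟨M, fun i hi => ?_⟩
    obtain ⟨hi0, hdesc⟩ := hi
    by_contra hgt
    push_neg at hgt
    rw [hfix i (by omega), hfix (i + 1) (by omega)] at hdesc
    omega
  have hnonempty : (descents δ).Nonempty := by
    by_contra hempty
    rw [Set.not_nonempty_iff_eq_empty] at hempty
    have hmono : ∀ i, δ i < δ (i + 1) := by
      intro i
      rcases Nat.eq_zero_or_pos i with rfl | hi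
      · rw [hδ0]
        have h1 : δ (0 + 1) ≠ 0 := fun h => by
          have := δ.injective (h.trans hδ0.symm); omega
        omega
      · have hni : i ∉ descents δ := by rw [hempty]; exact Set.notMem_empty i
        have hne2 : δ i ≠ δ (i + 1) := fun h => by
          have := δ.injective h; omega
        simp only [descents, Set.mem_setOf_eq, not_and, not_lt] at hni
        have := hni hi
        omega
    have hsm : StrictMono (δ : ℕ → ℕ) := strictMono_nat_of_lt_succ hmono
    have hid : ∀ i, δ i = i := by
      intro i
      induction i using Nat.strong_induction_on with
      | _ i ih =>
        have h1 : i ≤ δ i := hsm.le_apply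
        rcases eq_or_lt_of_le h1 with h | h
        · omega
        · exfalso
          have hji : δ (δ.symm i) = i := δ.apply_symm_apply i
          have h2 : δ.symm i ≤ δ (δ.symm i) := hsm.le_apply
          have hjle : δ.symm i ≤ i := by omega
          rcases eq_or_lt_of_le hjle with he | hlt2
          · rw [he] at hji; omega
          · have := ih _ hlt2; omega
    exact hne (Equiv.ext (by simp [hid]))
  have hd2mem : d2 δ ∈ descents δ := Nat.sSup_mem hnonempty hbdd
  have hd2ub : ∀ i ∈ descents δ, i ≤ d2 δ := fun i hi => le_csSup hbdd hi
  have hd1mem : d1 δ ∈ descents δ := Nat.sInf_mem hnonempty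
  have hd1d2 : d1 δ ≤ d2 δ := Nat.sInf_le hd2mem
  have had2 : a ≤ d2 δ := le_trans haa hd1d2
  have hd10 : 0 < d1 δ := hd1mem.1
  have hM1 : ∀ i, d2 δ < i → δ i < δ (i + 1) := by
    intro i hi
    have h0 : 0 < i := by omega
    by_contra hcon
    push_neg at hcon
    have hne2 : δ (i + 1) ≠ δ i := fun h => by
      have := δ.injective h; omega
    have : i ∈ descents δ := ⟨h0, by omega⟩
    have := hd2ub i this
    omega
  obtain ⟨hδab, hnoc⟩ := Stmt12Aux.key δ hδfin a b hab (by rw [← hπ]; exact hlen)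
  have part1 : ∀ i ∈ descents π, i ≤ d2 δ := by
    intro i hi
    obtain ⟨hi0, hdesc⟩ := hi
    by_contra hgt
    push_neg at hgt
    have hia : a < i := by omega
    rw [hπ] at hdesc
    simp only [Equiv.Perm.mul_apply] at hdesc
    by_cases hib : i = b
    · rw [hib, Equiv.swap_apply_right,
        Equiv.swap_apply_of_ne_of_ne (by omega) (by omega)] at hdesc
      have := hM1 b hb
      omega
    · by_cases hib2 : i + 1 = b
      · rw [hib2, Equiv.swap_apply_right,
          Equiv.swap_apply_of_ne_of_ne (by omega) hib] at hdesc
        rcases hnoc i hia (by omega) with h | h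
        · omega
        · have h2 := hM1 i hgt
          rw [hib2] at h2
          omega
      · rw [Equiv.swap_apply_of_ne_of_ne (by omega) hib,
          Equiv.swap_apply_of_ne_of_ne (by omega) hib2] at hdesc
        have : i ∈ descents δ := ⟨hi0, hdesc⟩
        have := hd2ub i this
        omega
  exact ⟨part1, csSup_le' part1⟩
end

section
/- For every permutation w ≠ id, we have κ(w) ≥ d₁(w); that is, the largest position i with w⁻¹(w(i)+1) < i satisfies i − 1 ≥ d₁(w). -/
/-- `i(w)`: the largest position `i` with `w⁻¹(w(i)+1) < i`. -/
noncomputable def iw (w : Equiv.Perm ℕ) : ℕ :=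
  sSup {i : ℕ | 0 < i ∧ w⁻¹ (w i + 1) < i}

/-- `φ(w) = t_{w(i(w)), w(i(w))+1} ∘ w`, swapping the values `w(i(w))` and `w(i(w))+1`. -/
noncomputable def phi (w : Equiv.Perm ℕ) : Equiv.Perm ℕ :=
  Equiv.swap (w (iw w)) (w (iw w) + 1) * w

/-- `κ(w) = i(w) - 1`. -/
noncomputable def kappa (w : Equiv.Perm ℕ) : ℕ := iw w - 1

lemma wi_ge_aux (w : Equiv.Perm ℕ) (h0 : w 0 = 0)
    (hmono : ∀ i, 0 < i → w i < w (i + 1)) : ∀ i, i ≤ w i := by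
  intro i
  induction i with
  | zero => exact Nat.zero_le _
  | succ n ih =>
    rcases Nat.eq_zero_or_pos n with h | h
    · subst h
      have h1 : w (0 + 1) ≠ 0 := by
        intro hc
        have := w.injective (hc.trans h0.symm)
        omega
      omega
    · have := hmono n h; omega

lemma descents_nonempty (w : Equiv.Perm ℕ) (h0 : w 0 = 0) (hne : w ≠ 1) :
    (descents w).Nonempty := by
  by_contra h
  rw [Set.not_nonempty_iff_eq_empty] at h
  have hmono : ∀ i, 0 < i → w i < w (i + 1) := by
    intro i hi
    have hni : i ∉ descents w := by simp [h]
    simp only [descents, Set.mem_setOf_eq, not_and, not_lt] at hni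
    have hle := hni hi
    have hneq : w i ≠ w (i + 1) := fun hc => by
      have := w.injective hc; omega
    omega
  have hge := wi_ge_aux w h0 hmono
  have hex : ∃ i, w i ≠ i := by
    by_contra hc
    push_neg at hc
    exact hne (Equiv.ext hc)
  set i := Nat.find hex with hidef
  have hi : w i ≠ i := Nat.find_spec hex
  have hmin : ∀ j, j < i → w j = j := fun j hj => by
    have := Nat.find_min hex hj; simpa using this
  have higt : i < w i := lt_of_le_of_ne (hge i) (Ne.symm hi)
  set j := w⁻¹ i with hjdef
  have hwj : w j = i := w.apply_symm_apply i
  have hji : j ≤ i := by have := hge j; omega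
  rcases lt_or_eq_of_le hji with hlt | heq
  · have := hmin j hlt; omega
  · rw [heq] at hwj; omega

lemma iw_set_bdd (w : Equiv.Perm ℕ) (hw : FinPerm w) :
    BddAbove {i : ℕ | 0 < i ∧ w⁻¹ (w i + 1) < i} := by
  obtain ⟨N, hN⟩ := hw.2.bddAbove
  refine ⟨N + 1, ?_⟩
  rintro i ⟨hi0, hilt⟩
  by_contra hc
  push_neg at hc
  have h1 : w i = i := by
    by_contra h
    have := hN (show i ∈ {i | w i ≠ i} from h)
    omega
  have h2 : w (i + 1) = i + 1 := by
    by_contra h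
    have := hN (show i + 1 ∈ {i | w i ≠ i} from h)
    omega
  have h3 : w⁻¹ (i + 1) = i + 1 := by
    conv_lhs => rw [← h2]
    exact w.symm_apply_apply (i + 1)
  rw [h1, h3] at hilt
  omega

theorem stmt13 (w : Equiv.Perm ℕ) (hw : FinPerm w) (hne : w ≠ 1) :
    d1 w ≤ kappa w := by
  have hd : d1 w ∈ descents w := Nat.sInf_mem (descents_nonempty w hw.1 hne)
  set d := d1 w with hddef
  obtain ⟨hd0, hdlt⟩ := hd
  have hinv1 : w⁻¹ (w (d + 1)) = d + 1 := w.symm_apply_apply (d + 1)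
  have hinvd : w⁻¹ (w d) = d := w.symm_apply_apply d
  set F := (Finset.Ico (w (d + 1)) (w d)).filter (fun v => d < w⁻¹ v) with hFdef
  have hFmem : ∀ x, x ∈ F ↔ (w (d + 1) ≤ x ∧ x < w d) ∧ d < w⁻¹ x := by
    intro x
    simp [hFdef, Finset.mem_filter, Finset.mem_Ico]
  have hF : w (d + 1) ∈ F := by
    rw [hFmem]
    exact ⟨⟨le_refl _, hdlt⟩, by omega⟩
  have hFne : F.Nonempty := ⟨_, hF⟩
  obtain ⟨v, hvdef⟩ : ∃ v, v = F.max' hFne := ⟨_, rfl⟩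
  have hvmem : v ∈ F := hvdef ▸ F.max'_mem hFne
  have hvmax : ∀ x ∈ F, x ≤ v := fun x hx => hvdef ▸ F.le_max' x hx
  rw [hFmem] at hvmem
  obtain ⟨⟨hvge, hvlt⟩, hdv⟩ := hvmem
  have hnext : w⁻¹ (v + 1) ≤ d := by
    rcases eq_or_lt_of_le (show v + 1 ≤ w d by omega) with h | h
    · rw [h, hinvd]
    · by_contra hc
      push_neg at hc
      have hmem : (v + 1) ∈ F := by
        rw [hFmem]
        exact ⟨⟨by omega, h⟩, hc⟩
      have := hvmax _ hmem
      omega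
  have hwi : w (w⁻¹ v) = v := w.apply_symm_apply v
  have hmem : w⁻¹ v ∈ {i : ℕ | 0 < i ∧ w⁻¹ (w i + 1) < i} := by
    constructor
    · omega
    · rw [hwi]; omega
  have hle : w⁻¹ v ≤ iw w := le_csSup (iw_set_bdd w hw) hmem
  unfold kappa
  omega
end
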